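/- There exists λ₀ ∈ (1, 2) such that for every λ ∈ (1, λ₀) and every point x ∈ ℝ³, there exist t ∈ [-ã(λ), ã(λ)] and n ∈ ℤ³ with ‖x - (t·v(λ) + n)‖ ≤ 5·(λ - 1). (In particular, the projection of J(λ) to the torus ℝ³/ℤ³ converges to the whole torus in the Hausdorff metric as λ → 1⁺.) -/

import Mathlib

/-- The center eigenvector `v(λ) = (1, 1/(λ-1), 1/λ)` in Euclidean `ℝ³`. -/
noncomputable def vvec (l : ℝ) : EuclideanSpace ℝ (Fin 3) :=
  (WithLp.equiv 2 (Fin 3 → ℝ)).symm ![1, 1 / (l - 1), 1 / l]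

/-- The half-length `ã(λ) = (1/2)·⌊1/(λ-1)⌋`. -/
noncomputable def atil (l : ℝ) : ℝ := ((⌊1 / (l - 1)⌋ : ℝ)) / 2

/-- An integer vector `n ∈ ℤ³` regarded as a point of Euclidean `ℝ³`. -/
noncomputable def intVec (n : Fin 3 → ℤ) : EuclideanSpace ℝ (Fin 3) :=
  (WithLp.equiv 2 (Fin 3 → ℝ)).symm fun i => (n i : ℝ)

/-- AP covering: an arithmetic progression with step `h` and terms `0, h, ..., Mz*h`
comes within `max h (1/2 - Mz*h)` of any `g ∈ [0, 1/2]`. -/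
lemma ap_cover (h g : ℝ) (Mz : ℤ) (hh : 0 < h) (hg0 : 0 ≤ g) (hg : g ≤ 1/2)
    (hM : 0 ≤ Mz) :
    ∃ m : ℤ, 0 ≤ m ∧ m ≤ Mz ∧ |g - m * h| ≤ max h (1/2 - Mz * h) := by
  refine ⟨min ⌊g / h⌋ Mz, le_min (Int.floor_nonneg.2 (div_nonneg hg0 hh.le)) hM,
    min_le_right _ _, ?_⟩
  rcases le_or_gt ⌊g / h⌋ Mz with hc | hc
  · rw [min_eq_left hc]
    have h1' : (⌊g / h⌋ : ℝ) * h ≤ g := (le_div_iff₀ hh).1 (Int.floor_le _)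
    have h2' : g < ((⌊g / h⌋ : ℝ) + 1) * h := (div_lt_iff₀ hh).1 (Int.lt_floor_add_one _)
    have : |g - (⌊g / h⌋ : ℝ) * h| ≤ h := by
      rw [abs_of_nonneg (by linarith)]; nlinarith
    exact this.trans (le_max_left _ _)
  · rw [min_eq_right hc.le]
    have h1 : (Mz : ℝ) + 1 ≤ (⌊g / h⌋ : ℝ) := by exact_mod_cast hc
    have h1' : ((Mz : ℝ) + 1) * h ≤ g := (le_div_iff₀ hh).1 (h1.trans (Int.floor_le _))
    have h1'' : (Mz : ℝ) * h ≤ g := by nlinarith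
    have : |g - (Mz : ℝ) * h| ≤ 1/2 - Mz * h := by
      rw [abs_of_nonneg (by linarith)]; linarith
    exact this.trans (le_max_right _ _)

set_option maxHeartbeats 1600000 in
/-- Density: there is `λ₀ ∈ (1,2)` such that for all `λ ∈ (1, λ₀)`, every point of `ℝ³` is
within `5(λ-1)` of some integer translate of the segment `J(λ)`; hence the projection of
`J(λ)` to `ℝ³/ℤ³` converges to the whole torus in the Hausdorff metric as `λ → 1⁺`. -/
theorem Jseg_dense :
    ∃ L0 : ℝ, 1 < L0 ∧ L0 < 2 ∧ ∀ l : ℝ, 1 < l → l < L0 →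
      ∀ x : EuclideanSpace ℝ (Fin 3),
        ∃ t ∈ Set.Icc (-atil l) (atil l), ∃ n : Fin 3 → ℤ,
          ‖x - (t • vvec l + intVec n)‖ ≤ 5 * (l - 1) := by
  refine ⟨101/100, by norm_num, by norm_num, fun l hl hl' x => ?_⟩
  set e : ℝ := l - 1 with he_def
  have he : 0 < e := by simp [he_def]; linarith
  have he1 : e < 1/100 := by simp [he_def]; linarith
  have hl0 : 0 < l := by linarith
  set h : ℝ := e / l with hh_def
  have hh : 0 < h := div_pos he hl0
  have hhe : h ≤ e := by
    rw [hh_def, div_le_iff₀ hl0]; nlinarith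
  set N : ℤ := ⌊1 / e⌋ with hN_def
  have hatil : atil l = (N : ℝ) / 2 := by rw [atil, hN_def, he_def]
  have hN1 : (N : ℝ) ≤ 1 / e := Int.floor_le _
  have hN2 : 1 / e - 1 < (N : ℝ) := Int.sub_one_lt_floor _
  have hue : e * (1 / e) = 1 := mul_one_div_cancel he.ne'
  have hinv : 100 < 1 / e := by
    rw [lt_div_iff₀ he]; linarith
  set Mz : ℤ := (N - 2) / 2 with hMz_def
  have hdiv := Int.mul_ediv_add_emod (N - 2) 2
  have hmod0 : 0 ≤ (N - 2) % 2 := Int.emod_nonneg _ (by norm_num)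
  have hmod1 : (N - 2) % 2 < 2 := Int.emod_lt_of_pos _ (by norm_num)
  have hMz1 : (Mz : ℝ) ≤ ((N : ℝ) - 2) / 2 := by
    have h1 : 2 * Mz ≤ N - 2 := by omega
    have h2 : 2 * (Mz : ℝ) ≤ (N : ℝ) - 2 := by exact_mod_cast h1
    linarith
  have hMz2 : ((N : ℝ) - 3) / 2 ≤ (Mz : ℝ) := by
    have h1 : N - 3 ≤ 2 * Mz := by omega
    have h2 : (N : ℝ) - 3 ≤ 2 * (Mz : ℝ) := by exact_mod_cast h1
    linarith
  have hMz0 : 0 ≤ Mz := by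
    have : (0:ℝ) ≤ (Mz : ℝ) := by nlinarith
    exact_mod_cast this
  have hEbound : max h (1/2 - (Mz : ℝ) * h) ≤ 5/2 * e := by
    refine max_le (by linarith) ?_
    have hMzh : ((1/e - 4)/2) * h ≤ (Mz : ℝ) * h := by
      apply mul_le_mul_of_nonneg_right _ hh.le
      linarith
    have key : (1/2 - 5/2*e) * l ≤ ((1/e - 4)/2) * e := by nlinarith [hue]
    have h2 : (1/2 - 5/2*e) ≤ ((1/e - 4)/2) * h := by
      rw [hh_def, mul_div_assoc', le_div_iff₀ hl0]; linarith
    linarith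
  set q1 : ℤ := ⌊x 0 + 1/2⌋ with hq1_def
  set b : ℝ := Int.fract (x 0 + 1/2) - 1/2 with hb_def
  have hxb : x 0 = (q1 : ℝ) + b := by
    rw [hb_def, Int.fract, hq1_def]; push_cast; ring
  have hb1 : -(1/2) ≤ b := by
    have := Int.fract_nonneg (x 0 + 1/2); rw [hb_def]; linarith
  have hb2 : b < 1/2 := by
    have := Int.fract_lt_one (x 0 + 1/2); rw [hb_def]; linarith
  set D : ℝ := x 0 - x 2 - b * h with hD_def
  set Q : ℤ := ⌊D⌋ with hQ_def
  set d : ℝ := Int.fract D with hd_def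
  have hDQ : D = (Q : ℝ) + d := by rw [hd_def, Int.fract]; ring
  have hd0 : 0 ≤ d := Int.fract_nonneg _
  have hd1 : d < 1 := Int.fract_lt_one _
  obtain ⟨m, P, hm, hmP⟩ :
      ∃ m P : ℤ, |(m : ℝ)| ≤ (Mz : ℝ) ∧
        |(m : ℝ) * h - D - (P : ℝ)| ≤ max h (1/2 - (Mz : ℝ) * h) := by
    rcases le_or_gt d (1/2) with hc | hc
    · obtain ⟨m, hm0, hmM, hmb⟩ := ap_cover h d Mz hh hd0 hc hMz0
      refine ⟨m, -Q, ?_, ?_⟩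
      · rw [abs_of_nonneg (by exact_mod_cast hm0 : (0:ℝ) ≤ (m:ℝ))]; exact_mod_cast hmM
      · have heq : (m : ℝ) * h - D - ((-Q : ℤ) : ℝ) = -(d - m * h) := by
          rw [hDQ]; push_cast; ring
        rw [heq, abs_neg]; exact hmb
    · obtain ⟨m, hm0, hmM, hmb⟩ := ap_cover h (1 - d) Mz hh (by linarith) (by linarith) hMz0
      refine ⟨-m, -Q - 1, ?_, ?_⟩
      · push_cast
        rw [abs_neg, abs_of_nonneg (by exact_mod_cast hm0 : (0:ℝ) ≤ (m:ℝ))]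
        exact_mod_cast hmM
      · have heq : ((-m : ℤ) : ℝ) * h - D - ((-Q - 1 : ℤ) : ℝ) = (1 - d) - m * h := by
          rw [hDQ]; push_cast; ring
        rw [heq]; exact hmb
  set τ : ℝ := b + (m : ℝ) with hτ_def
  set k : ℤ := ⌈τ / e - x 1⌉ with hk_def
  set t : ℝ := e * (x 1 + (k : ℝ)) with ht_def
  set r : ℝ := t - τ with hr_def
  have hr0 : 0 ≤ r := by
    have h1 : τ / e - x 1 ≤ (k : ℝ) := Int.le_ceil _
    have h2 : τ / e ≤ x 1 + (k : ℝ) := by linarith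
    rw [div_le_iff₀ he] at h2
    rw [hr_def, ht_def]; nlinarith
  have hr1 : r ≤ e := by
    have h1 : (k : ℝ) < τ / e - x 1 + 1 := Int.ceil_lt_add_one _
    have h2 : x 1 + (k : ℝ) - 1 < τ / e := by linarith
    rw [lt_div_iff₀ he] at h2
    rw [hr_def, ht_def]; nlinarith
  have htr : t ∈ Set.Icc (-atil l) (atil l) := by
    have habs : |t| ≤ (N : ℝ) / 2 := by
      have h1 : t = b + (m : ℝ) + r := by rw [hr_def, hτ_def]; ring
      have h2 : |t| ≤ |b| + |(m : ℝ)| + |r| := by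
        rw [h1]; exact (abs_add_le _ _).trans (by gcongr; exact abs_add_le _ _)
      have hb' : |b| ≤ 1/2 := abs_le.2 ⟨hb1, hb2.le⟩
      have hr' : |r| ≤ e := abs_le.2 ⟨by linarith, hr1⟩
      have : (Mz : ℝ) ≤ (N : ℝ)/2 - 1 := by linarith
      calc |t| ≤ 1/2 + (Mz : ℝ) + e := by linarith
        _ ≤ (N : ℝ) / 2 := by linarith
    rw [hatil]; exact abs_le.1 habs
  refine ⟨t, htr, ![q1 - m, -k, q1 - m + P], ?_⟩
  have hE1 : x 0 - (t * 1 + ((q1 - m : ℤ) : ℝ)) = -r := by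
    rw [hr_def, hτ_def, hxb]; push_cast; ring
  have hE2 : x 1 - (t * (1/(l-1)) + ((-k : ℤ) : ℝ)) = 0 := by
    rw [ht_def, ← he_def]; push_cast; field_simp; ring
  have hinvl : 1 / l = 1 - h := by
    rw [hh_def, he_def]; field_simp; ring
  have hE3 : x 2 - (t * (1/l) + ((q1 - m + P : ℤ) : ℝ))
      = ((m : ℝ) * h - D - P) - r * (1 - h) := by
    rw [hinvl]
    have hx2 : x 2 = (q1 : ℝ) + b - b * h - D := by rw [hD_def, hxb]; ring
    have ht' : t = b + (m : ℝ) + r := by rw [hr_def, hτ_def]; ring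
    rw [hx2, ht']; push_cast; ring
  have hE3b : |x 2 - (t * (1/l) + ((q1 - m + P : ℤ) : ℝ))| ≤ 7/2 * e := by
    rw [hE3]
    have h1 : |(m : ℝ) * h - D - P - r * (1 - h)| ≤ |(m : ℝ) * h - D - P| + |r * (1-h)| :=
      abs_sub _ _
    have h2 : |r * (1 - h)| ≤ e := by
      rw [abs_mul, abs_of_nonneg hr0, abs_of_nonneg (by linarith : (0:ℝ) ≤ 1 - h)]
      nlinarith
    linarith [hmP.trans hEbound]
  have hnorm : ‖x - (t • vvec l + intVec ![q1 - m, -k, q1 - m + P])‖ =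
      Real.sqrt ((x 0 - (t*1 + ((q1 - m : ℤ):ℝ)))^2
        + (x 1 - (t*(1/(l-1)) + ((-k : ℤ):ℝ)))^2
        + (x 2 - (t*(1/l) + ((q1 - m + P : ℤ):ℝ)))^2) := by
    simp [EuclideanSpace.norm_eq, vvec, intVec, Fin.sum_univ_three, sq_abs]
  rw [hnorm, hE1, hE2]
  have hfin : Real.sqrt ((-r)^2 + 0^2 + (x 2 - (t*(1/l) + ((q1 - m + P : ℤ):ℝ)))^2)
      ≤ Real.sqrt ((5 * e)^2) := by
    apply Real.sqrt_le_sqrt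
    have h3 := abs_le.1 hE3b
    nlinarith [sq_nonneg (x 2 - (t*(1/l) + ((q1 - m + P : ℤ):ℝ)))]
  rw [Real.sqrt_sq (by linarith)] at hfin
  calc _ ≤ 5 * e := hfin
    _ = 5 * (l - 1) := by rw [he_def]
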